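/- For any IU-family $\mathcal{G} \subseteq 2^{[n]}$ (with $n \geq 4$), the sturdiness satisfies $\beta(\mathcal{G}) \leq 2^{n-4}$, i.e., there exist distinct $i, j \in [n]$ with $|\mathcal{G}(i, \bar{j})| \leq 2^{n-4}$. -/

import Mathlib

open Finset

variable {α : Type*} [DecidableEq α] [Fintype α]

lemma pairing_sum {𝒜 ℬ : Finset (Finset α)}
    (h : ∀ A ∈ 𝒜, ∀ B ∈ ℬ, A ≠ Bᶜ) :
    𝒜.card + ℬ.card ≤ 2 ^ Fintype.card α := by
  have hinj : (ℬ.image compl).card = ℬ.card :=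
    Finset.card_image_of_injective _ compl_injective
  have hdisj : Disjoint 𝒜 (ℬ.image compl) := by
    rw [Finset.disjoint_left]
    rintro A hA hA'
    obtain ⟨B, hB, rfl⟩ := Finset.mem_image.1 hA'
    exact h _ hA _ hB rfl
  calc 𝒜.card + ℬ.card = (𝒜 ∪ ℬ.image compl).card := by
        rw [Finset.card_union_of_disjoint hdisj, hinj]
    _ ≤ (Finset.univ : Finset (Finset α)).card := Finset.card_le_card (Finset.subset_univ _)
    _ = 2 ^ Fintype.card α := by rw [Finset.card_univ, Fintype.card_finset]

lemma main_prod {𝒜 ℬ : Finset (Finset α)}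
    (hI : ∀ A ∈ 𝒜, ∀ B ∈ ℬ, (A ∩ B).Nonempty)
    (hU : ∀ A ∈ 𝒜, ∀ B ∈ ℬ, A ∪ B ≠ Finset.univ) :
    16 * (𝒜.card * ℬ.card) ≤ 4 ^ Fintype.card α := by
  classical
  set m := Fintype.card α with hm
  let up : Finset (Finset α) → Finset (Finset α) := fun 𝒞 =>
    Finset.univ.filter (fun C => ∃ A ∈ 𝒞, A ⊆ C)
  let dn : Finset (Finset α) → Finset (Finset α) := fun 𝒞 =>
    Finset.univ.filter (fun C => ∃ A ∈ 𝒞, C ⊆ A)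
  have hup : ∀ 𝒞 : Finset (Finset α), IsUpperSet (↑(up 𝒞) : Set (Finset α)) := by
    intro 𝒞 s t hst hs
    simp only [up, Finset.mem_coe, mem_filter, mem_univ, true_and] at hs ⊢
    obtain ⟨A, hA, hAs⟩ := hs
    exact ⟨A, hA, hAs.trans hst⟩
  have hdn : ∀ 𝒞 : Finset (Finset α), IsLowerSet (↑(dn 𝒞) : Set (Finset α)) := by
    intro 𝒞 s t hst hs
    simp only [dn, Finset.mem_coe, mem_filter, mem_univ, true_and] at hs ⊢
    obtain ⟨A, hA, hAs⟩ := hs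
    exact ⟨A, hA, hst.trans hAs⟩
  have hsub : ∀ 𝒞 : Finset (Finset α), 𝒞 ⊆ up 𝒞 ∩ dn 𝒞 := by
    intro 𝒞 C hC
    simp only [up, dn, mem_inter, mem_filter, mem_univ, true_and]
    exact ⟨⟨C, hC, subset_rfl⟩, ⟨C, hC, subset_rfl⟩⟩
  have kle : ∀ 𝒞 : Finset (Finset α),
      2 ^ m * 𝒞.card ≤ (up 𝒞).card * (dn 𝒞).card := by
    intro 𝒞
    calc 2 ^ m * 𝒞.card ≤ 2 ^ m * (up 𝒞 ∩ dn 𝒞).card :=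
          Nat.mul_le_mul_left _ (Finset.card_le_card (hsub 𝒞))
      _ ≤ (up 𝒞).card * (dn 𝒞).card := (hup 𝒞).card_inter_le_finset (hdn 𝒞)
  have hUsum : (up 𝒜).card + (up ℬ).card ≤ 2 ^ m := by
    apply pairing_sum
    intro C hC D hD hCD
    simp only [up, mem_filter, mem_univ, true_and] at hC hD
    obtain ⟨A, hA, hAC⟩ := hC
    obtain ⟨B, hB, hBD⟩ := hD
    obtain ⟨x, hx⟩ := hI A hA B hB
    rw [Finset.mem_inter] at hx
    have hx1 : x ∈ C := hAC hx.1
    rw [hCD] at hx1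
    exact (Finset.mem_compl.1 hx1) (hBD hx.2)
  have hDsum : (dn 𝒜).card + (dn ℬ).card ≤ 2 ^ m := by
    apply pairing_sum
    intro C hC D hD hCD
    simp only [dn, mem_filter, mem_univ, true_and] at hC hD
    obtain ⟨A, hA, hAC⟩ := hC
    obtain ⟨B, hB, hBD⟩ := hD
    apply hU A hA B hB
    apply Finset.eq_univ_of_forall
    intro x
    have hx : x ∈ C ∪ D := by
      rw [hCD, Finset.mem_union, Finset.mem_compl]
      tauto
    rcases Finset.mem_union.1 hx with h | h
    · exact Finset.mem_union.2 (Or.inl (hAC h))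
    · exact Finset.mem_union.2 (Or.inr (hBD h))
  -- arithmetic
  have h1 := kle 𝒜
  have h2 := kle ℬ
  have hP : (0:ℕ) < 2 ^ m := Nat.pow_pos (by norm_num)
  have amgm : ∀ x y : ℕ, 4 * (x * y) ≤ (x + y) * (x + y) := by
    intro x y; zify; nlinarith [sq_nonneg ((x:ℤ) - y)]
  have e1 : 4 * ((up 𝒜).card * (up ℬ).card) ≤ 2 ^ m * 2 ^ m :=
    (amgm _ _).trans (Nat.mul_le_mul hUsum hUsum)
  have e2 : 4 * ((dn 𝒜).card * (dn ℬ).card) ≤ 2 ^ m * 2 ^ m :=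
    (amgm _ _).trans (Nat.mul_le_mul hDsum hDsum)
  have key : 16 * (𝒜.card * ℬ.card) * (2 ^ m * 2 ^ m) ≤ 4 ^ m * (2 ^ m * 2 ^ m) := by
    have h3 : (2 ^ m * 𝒜.card) * (2 ^ m * ℬ.card) ≤
        ((up 𝒜).card * (dn 𝒜).card) * ((up ℬ).card * (dn ℬ).card) :=
      Nat.mul_le_mul h1 h2
    have h4 : (4 * ((up 𝒜).card * (up ℬ).card)) * (4 * ((dn 𝒜).card * (dn ℬ).card)) ≤
        (2 ^ m * 2 ^ m) * (2 ^ m * 2 ^ m) := Nat.mul_le_mul e1 e2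
    have h5 : 4 ^ m = 2 ^ m * 2 ^ m := by
      rw [← pow_add, ← two_mul, pow_mul]; norm_num
    calc 16 * (𝒜.card * ℬ.card) * (2 ^ m * 2 ^ m)
        = 16 * ((2 ^ m * 𝒜.card) * (2 ^ m * ℬ.card)) := by ring
      _ ≤ 16 * (((up 𝒜).card * (dn 𝒜).card) * ((up ℬ).card * (dn ℬ).card)) :=
          Nat.mul_le_mul_left _ h3
      _ = (4 * ((up 𝒜).card * (up ℬ).card)) * (4 * ((dn 𝒜).card * (dn ℬ).card)) := by ring
      _ ≤ (2 ^ m * 2 ^ m) * (2 ^ m * 2 ^ m) := h4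
      _ = 4 ^ m * (2 ^ m * 2 ^ m) := by rw [h5]
  exact Nat.le_of_mul_le_mul_right key (Nat.mul_pos hP hP)

lemma main_min {𝒜 ℬ : Finset (Finset α)} (hm : 2 ≤ Fintype.card α)
    (hI : ∀ A ∈ 𝒜, ∀ B ∈ ℬ, (A ∩ B).Nonempty)
    (hU : ∀ A ∈ 𝒜, ∀ B ∈ ℬ, A ∪ B ≠ Finset.univ) :
    𝒜.card ≤ 2 ^ (Fintype.card α - 2) ∨ ℬ.card ≤ 2 ^ (Fintype.card α - 2) := by
  have h := main_prod hI hU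
  have h4 : 4 ^ Fintype.card α = 16 * 4 ^ (Fintype.card α - 2) := by
    conv_lhs => rw [show Fintype.card α = 2 + (Fintype.card α - 2) by omega]
    rw [pow_add]; norm_num
  have hsq : ∀ a : ℕ, 16 * (a * a) ≤ 4 ^ Fintype.card α → a ≤ 2 ^ (Fintype.card α - 2) := by
    intro a ha
    rw [h4] at ha
    have h1 : a * a ≤ 4 ^ (Fintype.card α - 2) := Nat.le_of_mul_le_mul_left ha (by norm_num)
    have h2 : a ^ 2 ≤ (2 ^ (Fintype.card α - 2)) ^ 2 := by
      rw [← pow_mul, mul_comm, pow_mul]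
      norm_num
      rw [pow_two]
      exact h1
    exact (Nat.pow_le_pow_iff_left (by norm_num)).1 h2
  rcases Nat.le_total 𝒜.card ℬ.card with hle | hle
  · exact Or.inl (hsq _ (le_trans (Nat.mul_le_mul_left _ (Nat.mul_le_mul_left _ hle)) h))
  · exact Or.inr (hsq _ (le_trans (Nat.mul_le_mul_left _ (Nat.mul_le_mul_right _ hle)) h))

theorem sturdiness_IU (n : ℕ) (hn : 4 ≤ n) (G : Finset (Finset (Fin n)))
    (hI : ∀ F ∈ G, ∀ F' ∈ G, (F ∩ F').Nonempty)
    (hU : ∀ F ∈ G, ∀ F' ∈ G, F ∪ F' ≠ Finset.univ) :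
    ∃ i j : Fin n, i ≠ j ∧
      ((G.filter (fun F => i ∈ F ∧ j ∉ F)).image (fun F => F.erase i)).card ≤ 2 ^ (n - 4) := by
  classical
  have h0 : (0 : ℕ) < n := by omega
  have h1 : (1 : ℕ) < n := by omega
  set i : Fin n := ⟨0, h0⟩ with hi
  set j : Fin n := ⟨1, h1⟩ with hj
  have hij : i ≠ j := by simp [hi, hj, Fin.ext_iff]
  set A := (G.filter (fun F => i ∈ F ∧ j ∉ F)).image (fun F => F.erase i) with hA
  set B := (G.filter (fun F => j ∈ F ∧ i ∉ F)).image (fun F => F.erase j) with hB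
  -- structure of members of A and B
  have hAmem : ∀ C ∈ A, ∃ F ∈ G, i ∈ F ∧ j ∉ F ∧ C = F.erase i := by
    intro C hC
    obtain ⟨F, hF, rfl⟩ := Finset.mem_image.1 hC
    obtain ⟨hFG, hFi, hFj⟩ := Finset.mem_filter.1 hF
    exact ⟨F, hFG, hFi, hFj, rfl⟩
  have hBmem : ∀ C ∈ B, ∃ F ∈ G, j ∈ F ∧ i ∉ F ∧ C = F.erase j := by
    intro C hC
    obtain ⟨F, hF, rfl⟩ := Finset.mem_image.1 hC
    obtain ⟨hFG, hFj, hFi⟩ := Finset.mem_filter.1 hF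
    exact ⟨F, hFG, hFj, hFi, rfl⟩
  have hAp : ∀ C ∈ A, ∀ x ∈ C, x ≠ i ∧ x ≠ j := by
    intro C hC x hx
    obtain ⟨F, _, _, hFj, rfl⟩ := hAmem C hC
    exact ⟨Finset.ne_of_mem_erase hx, fun h => hFj (h ▸ Finset.mem_of_mem_erase hx)⟩
  have hBp : ∀ C ∈ B, ∀ x ∈ C, x ≠ i ∧ x ≠ j := by
    intro C hC x hx
    obtain ⟨F, _, _, hFi, rfl⟩ := hBmem C hC
    exact ⟨fun h => hFi (h ▸ Finset.mem_of_mem_erase hx), Finset.ne_of_mem_erase hx⟩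
  -- move to the subtype
  set p : Fin n → Prop := fun k => k ≠ i ∧ k ≠ j with hp
  have hcard : Fintype.card {k : Fin n // p k} = n - 2 := by
    rw [Fintype.card_subtype]
    have : Finset.univ.filter p = ({i, j} : Finset (Fin n))ᶜ := by
      ext k
      simp [hp, not_or]
    rw [this, Finset.card_compl, Fintype.card_fin,
      Finset.card_insert_of_notMem (by simp [hij]), Finset.card_singleton]
  set φ : Finset (Fin n) → Finset {k : Fin n // p k} := fun C => C.subtype p with hφ
  have hφrec : ∀ C : Finset (Fin n), (∀ x ∈ C, p x) →
      (φ C).map (Function.Embedding.subtype p) = C := by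
    intro C hC
    rw [hφ]
    simp only [Finset.subtype_map]
    exact Finset.filter_true_of_mem hC
  have hφcard : ∀ 𝒞 : Finset (Finset (Fin n)), (∀ C ∈ 𝒞, ∀ x ∈ C, p x) →
      (𝒞.image φ).card = 𝒞.card := by
    intro 𝒞 h𝒞
    apply Finset.card_image_of_injOn
    intro C₁ h₁ C₂ h₂ heq
    rw [← hφrec C₁ (h𝒞 _ h₁), ← hφrec C₂ (h𝒞 _ h₂), heq]
  have hAcard : (A.image φ).card = A.card := hφcard A hAp
  have hBcard : (B.image φ).card = B.card := hφcard B hBp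
  -- cross conditions
  have hI' : ∀ X ∈ A.image φ, ∀ Y ∈ B.image φ, (X ∩ Y).Nonempty := by
    intro X hX Y hY
    obtain ⟨C, hC, rfl⟩ := Finset.mem_image.1 hX
    obtain ⟨D, hD, rfl⟩ := Finset.mem_image.1 hY
    obtain ⟨F, hFG, hFi, hFj, rfl⟩ := hAmem C hC
    obtain ⟨F', hF'G, hF'j, hF'i, rfl⟩ := hBmem D hD
    obtain ⟨x, hx⟩ := hI F hFG F' hF'G
    rw [Finset.mem_inter] at hx
    have hxi : x ≠ i := fun h => hF'i (h ▸ hx.2)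
    have hxj : x ≠ j := fun h => hFj (h ▸ hx.1)
    refine ⟨⟨x, hxi, hxj⟩, ?_⟩
    rw [Finset.mem_inter, Finset.mem_subtype, Finset.mem_subtype]
    exact ⟨Finset.mem_erase.2 ⟨hxi, hx.1⟩, Finset.mem_erase.2 ⟨hxj, hx.2⟩⟩
  have hU' : ∀ X ∈ A.image φ, ∀ Y ∈ B.image φ, X ∪ Y ≠ Finset.univ := by
    intro X hX Y hY heq
    obtain ⟨C, hC, rfl⟩ := Finset.mem_image.1 hX
    obtain ⟨D, hD, rfl⟩ := Finset.mem_image.1 hY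
    obtain ⟨F, hFG, hFi, hFj, rfl⟩ := hAmem C hC
    obtain ⟨F', hF'G, hF'j, hF'i, rfl⟩ := hBmem D hD
    apply hU F hFG F' hF'G
    apply Finset.eq_univ_of_forall
    intro x
    by_cases hxi : x = i
    · exact Finset.mem_union.2 (Or.inl (hxi ▸ hFi))
    by_cases hxj : x = j
    · exact Finset.mem_union.2 (Or.inr (hxj ▸ hF'j))
    have : (⟨x, hxi, hxj⟩ : {k : Fin n // p k}) ∈ φ (F.erase i) ∪ φ (F'.erase j) := by
      rw [heq]; exact Finset.mem_univ _
    rcases Finset.mem_union.1 this with h | h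
    · rw [Finset.mem_subtype] at h
      exact Finset.mem_union.2 (Or.inl (Finset.mem_of_mem_erase h))
    · rw [Finset.mem_subtype] at h
      exact Finset.mem_union.2 (Or.inr (Finset.mem_of_mem_erase h))
  have hm2 : 2 ≤ Fintype.card {k : Fin n // p k} := by omega
  have hmain := main_min hm2 hI' hU'
  rw [hAcard, hBcard, hcard] at hmain
  have hexp : n - 2 - 2 = n - 4 := by omega
  rw [hexp] at hmain
  rcases hmain with h | h
  · exact ⟨i, j, hij, h⟩
  · exact ⟨j, i, hij.symm, h⟩
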